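/- Simulation Lemma: for every step t with 1 ≤ t ≤ T, ‖d_t^{π_θ} − d_t^{π_roll}‖_TV ≤ (t−1) · D_TV^{tok,max}, where ‖·‖_TV denotes total variation distance between distributions on contexts and D_TV^{tok,max} = max over steps t and contexts c of D_TV(π_θ(·|c), π_roll(·|c)) with D_TV(p,q) = ½ Σ_{v∈𝒱} |p(v) − q(v)|. -/
import Mathlib


open Finset

section Setup

variable {X V : Type*}

/-- A policy assigns to each context `(x, y_{<t})` (a prompt together with a token
prefix of length `t`) a strictly positive probability distribution on the next token. -/
structure Policy (X V : Type*) [Fintype V] where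
  prob : ∀ t : ℕ, X × (Fin t → V) → V → ℝ
  pos : ∀ t c v, 0 < prob t c v
  sum_one : ∀ t c, ∑ v, prob t c v = 1

variable [Fintype X] [Fintype V]

/-- Trajectory probability `P^π(y | x) = ∏_t π(y_t | x, y_{<t})`. -/
noncomputable def traj (π : Policy X V) (T : ℕ) (x : X) (y : Fin T → V) : ℝ :=
  ∏ t : Fin T, π.prob t.1 (x, fun s : Fin t.1 => y (Fin.castLE t.isLt.le s)) (y t)

/-- Context visitation mass at prefix length `k`: this is the paper's `d_{k+1}^π`,
a distribution on pairs (prompt, prefix of `k` tokens). -/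
noncomputable def visit (π : Policy X V) (P : X → ℝ) (k : ℕ) (c : X × (Fin k → V)) : ℝ :=
  P c.1 * ∏ s : Fin k, π.prob s.1 (c.1, fun u : Fin s.1 => c.2 (Fin.castLE s.isLt.le u)) (c.2 s)

/-- Total variation distance `½ ∑ |p - q|`. -/
noncomputable def tvDist {α : Type*} [Fintype α] (p q : α → ℝ) : ℝ :=
  (∑ a, |p a - q a|) / 2

/-- KL divergence `∑ p log (p/q)`. -/
noncomputable def klDiv {α : Type*} [Fintype α] (p q : α → ℝ) : ℝ :=
  ∑ a, p a * Real.log (p a / q a)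

/-- The objective `J(π) = E_{x∼P} E_{y∼P^π(·|x)}[R(x,y)]`. -/
noncomputable def Jval (P : X → ℝ) (T : ℕ) (R : X → (Fin T → V) → ℝ) (π : Policy X V) : ℝ :=
  ∑ x, P x * ∑ y : Fin T → V, traj π T x y * R x y

/-- `Q^π(c, v)`: conditional expectation of the reward under continuation by `π`,
given context `c` (of length `k`) and next token `v`. -/
noncomputable def Qval (T : ℕ) (R : X → (Fin T → V) → ℝ) (π : Policy X V)
    (k : ℕ) (hk : k < T) (c : X × (Fin k → V)) (v : V) : ℝ := by
  classical
  exact ∑ y : Fin T → V,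
    if (∀ s : Fin k, y (Fin.castLE hk.le s) = c.2 s) ∧ y ⟨k, hk⟩ = v then
      (∏ s : Fin T, if k < s.1 then
          π.prob s.1 (c.1, fun u : Fin s.1 => y (Fin.castLE s.isLt.le u)) (y s)
        else 1) * R c.1 y
    else 0

/-- `V^π(c) = E_{v ∼ π(·|c)}[Q^π(c, v)]`. -/
noncomputable def Vval (T : ℕ) (R : X → (Fin T → V) → ℝ) (π : Policy X V)
    (k : ℕ) (hk : k < T) (c : X × (Fin k → V)) : ℝ :=
  ∑ v, π.prob k c v * Qval T R π k hk c v

/-- Per-step advantage `A_t(c, v) = Q^{π_roll}(c,v) - V^{π_roll}(c)`. -/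
noncomputable def Aval (T : ℕ) (R : X → (Fin T → V) → ℝ) (πroll : Policy X V)
    (k : ℕ) (hk : k < T) (c : X × (Fin k → V)) (v : V) : ℝ :=
  Qval T R πroll k hk c v - Vval T R πroll k hk c

/-- `g_t(c) = E_{v ∼ π_θ(·|c)}[A_t(c, v)]`. -/
noncomputable def gval (T : ℕ) (R : X → (Fin T → V) → ℝ) (πroll πθ : Policy X V)
    (k : ℕ) (hk : k < T) (c : X × (Fin k → V)) : ℝ :=
  ∑ v, πθ.prob k c v * Aval T R πroll k hk c v

/-- Surrogate objective `L = ∑_{t=1}^T E_{c ∼ d_t^{π_roll}}[g_t(c)]`. -/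
noncomputable def surrogate (P : X → ℝ) (T : ℕ) (R : X → (Fin T → V) → ℝ)
    (πroll πθ : Policy X V) : ℝ :=
  ∑ k : Fin T, ∑ c : X × (Fin k.1 → V), visit πroll P k.1 c * gval T R πroll πθ k.1 k.isLt c

/-- Approximation error `Error = J(π_θ) - J(π_roll) - L`. -/
noncomputable def errVal (P : X → ℝ) (T : ℕ) (R : X → (Fin T → V) → ℝ)
    (πroll πθ : Policy X V) : ℝ :=
  Jval P T R πθ - Jval P T R πroll - surrogate P T R πroll πθ

/-- Sequence-level KL divergence `D_KL^seq = E_{x∼P}[D_KL(P^{π_roll}(·|x) ‖ P^{π_θ}(·|x))]`. -/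
noncomputable def seqKL (P : X → ℝ) (T : ℕ) (πroll πθ : Policy X V) : ℝ :=
  ∑ x, P x * klDiv (fun y : Fin T → V => traj πroll T x y) (fun y => traj πθ T x y)

end Setup



section SimAux
variable {X V : Type*} [Fintype X] [Fintype V]

lemma visit_succ (π : Policy X V) (P : X → ℝ) (k : ℕ) (x : X) (y : Fin k → V) (v : V) :
    visit π P (k+1) (x, Fin.snoc y v) = visit π P k (x, y) * π.prob k (x, y) v := by
  unfold visit
  simp only [Fin.prod_univ_castSucc]
  have hlast : (Fin.snoc y v : Fin (k+1) → V) (Fin.last k) = v := Fin.snoc_last ..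
  have hcs : ∀ s : Fin k, (Fin.snoc y v : Fin (k+1) → V) s.castSucc = y s :=
    fun s => Fin.snoc_castSucc ..
  have harg : ∀ s : Fin k,
      (fun u : Fin (s.castSucc).1 => (Fin.snoc y v : Fin (k+1) → V) (Fin.castLE (s.castSucc).isLt.le u))
        = fun u : Fin s.1 => y (Fin.castLE s.isLt.le u) := by
    intro s
    funext u
    have hu : ((Fin.castLE (s.castSucc).isLt.le u) : Fin (k+1)).1 < k := lt_trans u.isLt s.isLt
    have hu' : (u : ℕ) < k := hu
    simp [Fin.snoc, hu', Fin.castLT, Fin.castLE]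
  have hargl : (fun u : Fin (Fin.last k).1 => (Fin.snoc y v : Fin (k+1) → V) (Fin.castLE (Fin.last k).isLt.le u))
      = y := by
    funext u
    have hu : ((Fin.castLE (Fin.last k).isLt.le u) : Fin (k+1)).1 < k := u.isLt
    have hu' : (u : ℕ) < k := hu
    simp [Fin.snoc, hu', Fin.castLT, Fin.castLE]
  rw [hlast]
  calc P x * ((∏ s : Fin k, π.prob (s.castSucc).1
        (x, fun u : Fin (s.castSucc).1 => (Fin.snoc y v : Fin (k+1) → V) (Fin.castLE (s.castSucc).isLt.le u))
        ((Fin.snoc y v : Fin (k+1) → V) s.castSucc)) * π.prob (Fin.last k).1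
        (x, fun u : Fin (Fin.last k).1 => (Fin.snoc y v : Fin (k+1) → V) (Fin.castLE (Fin.last k).isLt.le u)) v)
      = P x * ((∏ s : Fin k, π.prob s.1 (x, fun u : Fin s.1 => y (Fin.castLE s.isLt.le u)) (y s)) * π.prob k (x, y) v) := by
        rw [hargl]
        congr 2
        exact Finset.prod_congr rfl fun s _ => by rw [harg s, hcs s]; rfl
    _ = P x * (∏ s : Fin k, π.prob s.1 (x, fun u : Fin s.1 => y (Fin.castLE s.isLt.le u)) (y s)) * π.prob k (x, y) v := by ring

lemma sum_snoc {k : ℕ} (f : (Fin (k+1) → V) → ℝ) :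
    ∑ y, f y = ∑ y : Fin k → V, ∑ v, f (Fin.snoc y v) := by
  rw [← (Fin.snocEquiv (fun _ => V)).sum_comp f, Fintype.sum_prod_type, Finset.sum_comm]
  rfl

lemma visit_nonneg (π : Policy X V) (P : X → ℝ) (hP0 : ∀ x, 0 ≤ P x) (k : ℕ)
    (c : X × (Fin k → V)) : 0 ≤ visit π P k c :=
  mul_nonneg (hP0 _) (Finset.prod_nonneg fun s _ => (π.pos _ _ _).le)

lemma visit_sum_one (π : Policy X V) (P : X → ℝ) (hP1 : ∑ x, P x = 1) :
    ∀ k : ℕ, ∑ c : X × (Fin k → V), visit π P k c = 1 := by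
  intro k
  induction k with
  | zero =>
    rw [Fintype.sum_prod_type]
    simpa [visit] using hP1
  | succ k ih =>
    rw [Fintype.sum_prod_type]
    have : ∀ x : X, (∑ y : Fin (k+1) → V, visit π P (k+1) (x, y))
        = ∑ y : Fin k → V, visit π P k (x, y) := by
      intro x
      rw [sum_snoc (fun y => visit π P (k+1) (x, y))]
      refine Finset.sum_congr rfl fun y _ => ?_
      simp only [visit_succ, ← Finset.mul_sum, π.sum_one, mul_one]
    rw [Finset.sum_congr rfl fun x _ => this x, ← Fintype.sum_prod_type, ih]


end SimAux

/-- **Simulation Lemma**: for every `1 ≤ t ≤ T`,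
`‖d_t^{π_θ} − d_t^{π_roll}‖_TV ≤ (t−1) · D_TV^tok,max`.
Here `Dtv` is (an upper bound on, in particular the maximum of) the token-level TV
divergences over all steps and contexts, and `d_t^π = visit π P (t−1)`. -/
theorem simulation_lemma
    {X V : Type*} [Fintype X] [Fintype V]
    (T : ℕ) (hT : 1 ≤ T)
    (P : X → ℝ) (hP0 : ∀ x, 0 ≤ P x) (hP1 : ∑ x, P x = 1)
    (πroll πθ : Policy X V)
    (Dtv : ℝ)
    (hD : ∀ k : ℕ, k < T → ∀ c : X × (Fin k → V),
      tvDist (πθ.prob k c) (πroll.prob k c) ≤ Dtv)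
    (t : ℕ) (ht1 : 1 ≤ t) (ht2 : t ≤ T) :
    tvDist (visit πθ P (t - 1)) (visit πroll P (t - 1)) ≤ ((t : ℝ) - 1) * Dtv := by
  have key : ∀ k : ℕ, k < T →
      tvDist (visit πθ P k) (visit πroll P k) ≤ (k : ℝ) * Dtv := by
    intro k
    induction k with
    | zero => intro _; simp [tvDist, visit]
    | succ k ih =>
      intro hkT
      have hk : k < T := Nat.lt_of_succ_lt hkT
      have ihk := ih hk
      have bound : ∀ (x : X) (y : Fin k → V),
          (∑ v, |visit πθ P (k+1) (x, Fin.snoc y v) - visit πroll P (k+1) (x, Fin.snoc y v)|)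
          ≤ 2 * Dtv * visit πθ P k (x, y)
            + |visit πθ P k (x, y) - visit πroll P k (x, y)| := by
        intro x y
        set a := visit πθ P k (x, y) with ha'
        set b := visit πroll P k (x, y) with hb'
        have ha : 0 ≤ a := visit_nonneg _ _ hP0 _ _
        have hS : (∑ v, |πθ.prob k (x, y) v - πroll.prob k (x, y) v|) ≤ 2 * Dtv := by
          have := hD k hk (x, y)
          unfold tvDist at this
          linarith
        calc (∑ v, |visit πθ P (k+1) (x, Fin.snoc y v) - visit πroll P (k+1) (x, Fin.snoc y v)|)
            = ∑ v, |a * πθ.prob k (x, y) v - b * πroll.prob k (x, y) v| := by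
              refine Finset.sum_congr rfl fun v _ => ?_
              rw [visit_succ, visit_succ]
          _ ≤ ∑ v, (a * |πθ.prob k (x, y) v - πroll.prob k (x, y) v|
                + |a - b| * πroll.prob k (x, y) v) := by
              refine Finset.sum_le_sum fun v _ => ?_
              have hre : a * πθ.prob k (x, y) v - b * πroll.prob k (x, y) v
                  = a * (πθ.prob k (x, y) v - πroll.prob k (x, y) v)
                    + (a - b) * πroll.prob k (x, y) v := by ring
              rw [hre]
              refine (abs_add_le _ _).trans ?_
              rw [abs_mul, abs_mul, abs_of_nonneg ha,
                abs_of_nonneg (πroll.pos k (x, y) v).le]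
          _ = a * (∑ v, |πθ.prob k (x, y) v - πroll.prob k (x, y) v|) + |a - b| := by
              rw [Finset.sum_add_distrib, ← Finset.mul_sum, ← Finset.mul_sum, πroll.sum_one,
                mul_one]
          _ ≤ 2 * Dtv * a + |a - b| := by
              have := mul_le_mul_of_nonneg_left hS ha
              linarith
      have hsum : (∑ c : X × (Fin (k+1) → V), |visit πθ P (k+1) c - visit πroll P (k+1) c|)
          ≤ 2 * Dtv + ∑ c : X × (Fin k → V), |visit πθ P k c - visit πroll P k c| := by
        have e1 : (∑ c : X × (Fin (k+1) → V), |visit πθ P (k+1) c - visit πroll P (k+1) c|)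
            = ∑ x, ∑ y : Fin k → V, ∑ v,
              |visit πθ P (k+1) (x, Fin.snoc y v) - visit πroll P (k+1) (x, Fin.snoc y v)| := by
          rw [Fintype.sum_prod_type]
          exact Finset.sum_congr rfl fun x _ => sum_snoc _
        rw [e1]
        calc (∑ x, ∑ y : Fin k → V, ∑ v,
              |visit πθ P (k+1) (x, Fin.snoc y v) - visit πroll P (k+1) (x, Fin.snoc y v)|)
            ≤ ∑ x, ∑ y : Fin k → V, (2 * Dtv * visit πθ P k (x, y)
                + |visit πθ P k (x, y) - visit πroll P k (x, y)|) := by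
              exact Finset.sum_le_sum fun x _ => Finset.sum_le_sum fun y _ => bound x y
          _ = 2 * Dtv * (∑ c : X × (Fin k → V), visit πθ P k c)
              + ∑ c : X × (Fin k → V), |visit πθ P k c - visit πroll P k c| := by
              rw [Fintype.sum_prod_type, Fintype.sum_prod_type]
              simp [Finset.sum_add_distrib, Finset.mul_sum]
          _ = 2 * Dtv + ∑ c : X × (Fin k → V), |visit πθ P k c - visit πroll P k c| := by
              rw [visit_sum_one πθ P hP1, mul_one]
      unfold tvDist at ihk ⊢
      push_cast
      linarith
  have hlt : t - 1 < T := lt_of_lt_of_le (Nat.sub_lt ht1 one_pos) ht2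
  have := key (t - 1) hlt
  rwa [Nat.cast_sub ht1, Nat.cast_one] at this
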